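/- For any directed graph G, MRB(G) is at most the size of a minimum feedback vertex set of G. -/

import Mathlib

/-- The set of buffered vertices when the vertices in `S` have been processed:
vertices in `S` with an out-arc to an unprocessed vertex. -/
def bufferSet {V : Type*} [Fintype V] [DecidableEq V] (arc : V → V → Prop) [DecidableRel arc]
    (S : Finset V) : Finset V :=
  S.filter (fun u => ∃ v, v ∉ S ∧ arc u v)

/-- The running buffer size of the ordering `l` on the digraph with arc relation `arc`:
the peak buffer occupancy, accounting for the momentary extra buffer slot when the newly
processed vertex itself enters the buffer before previously buffered vertices exit. -/
def RB {V : Type*} [Fintype V] [DecidableEq V] (arc : V → V → Prop) [DecidableRel arc]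
    (l : List V) : ℕ :=
  (List.range l.length).foldl
    (fun m k =>
      let Sold := (l.take k).toFinset
      let Snew := (l.take (k + 1)).toFinset
      let tc : ℕ := if Snew \ Sold ⊆ bufferSet arc Snew then 1 else 0
      max m (max (bufferSet arc Snew).card ((bufferSet arc Sold).card + tc))) 0

/-- The minimum running buffer of a digraph: minimum of `RB` over all linear orderings. -/
noncomputable def MRB {V : Type*} [Fintype V] [DecidableEq V] (arc : V → V → Prop)
    [DecidableRel arc] : ℕ :=
  sInf {k | ∃ l : List V, l.Nodup ∧ (∀ v, v ∈ l) ∧ RB arc l = k}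
/-- A directed graph (arc relation) is acyclic if no vertex lies on a directed cycle. -/
def IsAcyclicRel {V : Type*} (arc : V → V → Prop) : Prop :=
  ∀ v, ¬ Relation.TransGen arc v v

/-- `F` is a feedback vertex set: removing `F` leaves the digraph acyclic. -/
def IsFVS {V : Type*} [DecidableEq V] (arc : V → V → Prop) (F : Finset V) : Prop :=
  IsAcyclicRel (fun u v => u ∉ F ∧ v ∉ F ∧ arc u v)

/-- An acyclic relation has a "sink" in any nonempty finite set: a vertex with no
out-neighbor inside the set. -/
lemma aux_exists_sink {V : Type*} [Fintype V] (r : V → V → Prop)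
    (hr : IsAcyclicRel r) {T : Finset V} (hT : T.Nonempty) :
    ∃ u ∈ T, ∀ v ∈ T, ¬ r u v := by
  haveI : IsTrans V (fun a b => Relation.TransGen r b a) :=
    ⟨fun a b c hab hbc => hbc.trans hab⟩
  haveI : IsIrrefl V (fun a b => Relation.TransGen r b a) := ⟨fun a => hr a⟩
  have wf : WellFounded (fun a b => Relation.TransGen r b a) :=
    Finite.wellFounded_of_trans_of_irrefl _
  obtain ⟨u, huT, hmin⟩ := wf.has_min ↑T (by exact_mod_cast hT)
  exact ⟨u, huT, fun v hv hrv => hmin v hv (Relation.TransGen.single hrv)⟩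

/-- A reverse-topological ordering of `T` for an acyclic relation: every prefix is
closed under out-arcs staying inside `T`. -/
lemma aux_exists_topo {V : Type*} [Fintype V] [DecidableEq V] (r : V → V → Prop)
    (hr : IsAcyclicRel r) (T : Finset V) :
    ∃ l : List V, l.Nodup ∧ l.toFinset = T ∧
      ∀ k u v, u ∈ l.take k → r u v → v ∈ T → v ∈ l.take k := by
  induction T using Finset.strongInduction with
  | _ T ih =>
    rcases T.eq_empty_or_nonempty with rfl | hT
    · exact ⟨[], by simp⟩
    · obtain ⟨u, huT, hsink⟩ := aux_exists_sink r hr hT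
      obtain ⟨l', hnd, htf, hcl⟩ := ih (T.erase u) (Finset.erase_ssubset huT)
      refine ⟨u :: l', ?_, ?_, ?_⟩
      · refine List.nodup_cons.mpr ⟨fun h => ?_, hnd⟩
        have : u ∈ T.erase u := htf ▸ List.mem_toFinset.mpr h
        simp at this
      · simp [htf, Finset.insert_erase huT]
      · intro k w v hw hrwv hvT
        match k with
        | 0 => simp at hw
        | k + 1 =>
          simp only [List.take_succ_cons, List.mem_cons] at hw ⊢
          rcases hw with rfl | hw
          · exact absurd hrwv (hsink v hvT)
          · rcases eq_or_ne v u with rfl | hne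
            · exact Or.inl rfl
            · exact Or.inr (hcl k w v hw hrwv (Finset.mem_erase.mpr ⟨hne, hvT⟩))

lemma aux_foldl_max_le {f : ℕ → ℕ} {c : ℕ} :
    ∀ (L : List ℕ) (a : ℕ), a ≤ c → (∀ x ∈ L, f x ≤ c) →
      L.foldl (fun m k => max m (f k)) a ≤ c := by
  intro L
  induction L with
  | nil => intro a ha _; simpa using ha
  | cons x L ih =>
    intro a ha hL
    exact ih _ (max_le ha (hL x List.mem_cons_self))
      (fun y hy => hL y (List.mem_cons_of_mem _ hy))

/-- Given a feedback vertex set `F`, there is a complete ordering whose every prefix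
has its buffer set contained in `F`. -/
lemma aux_exists_good_order {V : Type*} [Fintype V] [DecidableEq V]
    (arc : V → V → Prop) [DecidableRel arc] (F : Finset V) (hF : IsFVS arc F) :
    ∃ l : List V, l.Nodup ∧ (∀ v, v ∈ l) ∧
      ∀ k, bufferSet arc ((l.take k).toFinset) ⊆ F := by
  obtain ⟨lR, hndR, htfR, hcl⟩ :=
    aux_exists_topo (fun u v => u ∉ F ∧ v ∉ F ∧ arc u v) hF (Finset.univ \ F)
  refine ⟨F.toList ++ lR, ?_, ?_, ?_⟩
  · refine List.nodup_append'.mpr ⟨F.nodup_toList, hndR, fun a ha ha' => ?_⟩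
    have h1 : a ∈ F := Finset.mem_toList.mp ha
    have h2 : a ∈ Finset.univ \ F := htfR ▸ List.mem_toFinset.mpr ha'
    simp [h1] at h2
  · intro v
    rcases em (v ∈ F) with hv | hv
    · exact List.mem_append.mpr (Or.inl (Finset.mem_toList.mpr hv))
    · exact List.mem_append.mpr (Or.inr (List.mem_toFinset.mp (htfR ▸ by simp [hv])))
  · intro k u hu
    by_contra huF
    rw [bufferSet, Finset.mem_filter] at hu
    obtain ⟨huS, v, hvS, harc⟩ := hu
    rw [List.take_append, List.toFinset_append, Finset.mem_union] at huS
    have huR : u ∈ lR.take (k - F.toList.length) := by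
      rcases huS with h | h
      · exact absurd (Finset.mem_toList.mp (List.mem_of_mem_take (List.mem_toFinset.mp h))) huF
      · exact List.mem_toFinset.mp h
    have hk : F.toList.length < k := by
      by_contra hk
      push_neg at hk
      have : k - F.toList.length = 0 := Nat.sub_eq_zero_of_le hk
      rw [this] at huR; simp at huR
    have hvF : v ∉ F := by
      intro hvF
      apply hvS
      rw [List.take_append, List.toFinset_append, Finset.mem_union]
      left
      rw [List.take_of_length_le (le_of_lt hk)]
      exact List.mem_toFinset.mpr (Finset.mem_toList.mpr hvF)
    have hvT : v ∈ Finset.univ \ F := by simp [hvF]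
    have := hcl (k - F.toList.length) u v huR ⟨huF, hvF, harc⟩ hvT
    apply hvS
    rw [List.take_append, List.toFinset_append, Finset.mem_union]
    exact Or.inr (List.mem_toFinset.mpr this)

lemma aux_RB_le {V : Type*} [Fintype V] [DecidableEq V]
    (arc : V → V → Prop) [DecidableRel arc] (F : Finset V) (l : List V)
    (hnd : l.Nodup)
    (hbuf : ∀ k, bufferSet arc ((l.take k).toFinset) ⊆ F) :
    RB arc l ≤ F.card := by
  rw [RB]
  apply aux_foldl_max_le (f := fun k =>
      max (bufferSet arc ((l.take (k+1)).toFinset)).card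
        ((bufferSet arc ((l.take k).toFinset)).card +
          if (l.take (k+1)).toFinset \ (l.take k).toFinset ⊆
              bufferSet arc ((l.take (k+1)).toFinset) then 1 else 0))
    (List.range l.length) 0 (Nat.zero_le _)
  intro x hx
  rw [List.mem_range] at hx
  apply max_le (Finset.card_le_card (hbuf (x+1)))
  split_ifs with h
  · set w := l.get ⟨x, hx⟩ with hw
    have htake : l.take (x+1) = l.take x ++ [w] := by
      rw [List.take_succ]
      congr
      simp [List.getElem?_eq_getElem hx]
      rfl
    have hndtake : (l.take (x+1)).Nodup := (List.take_sublist _ _).nodup hnd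
    rw [htake] at hndtake
    have hwnot : w ∉ l.take x := by
      rcases List.nodup_append'.mp hndtake with ⟨_, _, hdisj⟩
      intro hmem
      exact hdisj hmem (List.mem_singleton_self w)
    have hwSnew : w ∈ (l.take (x+1)).toFinset := by
      rw [htake]; simp
    have hwsd : w ∈ (l.take (x+1)).toFinset \ (l.take x).toFinset := by
      rw [Finset.mem_sdiff]
      exact ⟨hwSnew, fun hc => hwnot (List.mem_toFinset.mp hc)⟩
    have hwF : w ∈ F := hbuf (x+1) (h hwsd)
    have hwnotbuf : w ∉ bufferSet arc ((l.take x).toFinset) := by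
      intro hc
      exact hwnot (List.mem_toFinset.mp (Finset.mem_filter.mp hc).1)
    have hins : insert w (bufferSet arc ((l.take x).toFinset)) ⊆ F :=
      Finset.insert_subset hwF (hbuf x)
    calc (bufferSet arc ((l.take x).toFinset)).card + 1
        = (insert w (bufferSet arc ((l.take x).toFinset))).card :=
          (Finset.card_insert_of_notMem hwnotbuf).symm
      _ ≤ F.card := Finset.card_le_card hins
  · simpa using Finset.card_le_card (hbuf x)

/-- For any directed graph, the minimum running buffer is at most the
size of any (hence of a minimum) feedback vertex set. -/
theorem mrb_le_fvs_card {V : Type*} [Fintype V] [DecidableEq V]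
    (arc : V → V → Prop) [DecidableRel arc] (F : Finset V) (hF : IsFVS arc F) :
    MRB arc ≤ F.card := by
  obtain ⟨l, hnd, hall, hbuf⟩ := aux_exists_good_order arc F hF
  have hmem : RB arc l ∈ {k | ∃ l : List V, l.Nodup ∧ (∀ v, v ∈ l) ∧ RB arc l = k} :=
    ⟨l, hnd, hall, rfl⟩
  exact le_trans (Nat.sInf_le hmem) (aux_RB_le arc F l hnd hbuf)
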